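/- Convergence (eventual consistency): if H is injective, then for any two lists L and L' of values in Σ × ℕ that are permutations of each other, folding the merge operation over L and over L' yields the same value; hence any two workers that have received the same set of state updates, in any delivery order, hold identical merged state. -/

import Mathlib

/-- The relation `≤ₑ` on values `(v, t) ∈ Σ × ℕ`:
`(v₁,t₁) ≤ₑ (v₂,t₂)` iff `t₁ < t₂`, or (`t₁ = t₂` and `H v₁ ≤ H v₂`). -/
def leE {σ : Type*} (H : σ → ℕ) (V₁ V₂ : σ × ℕ) : Prop :=
  V₁.2 < V₂.2 ∨ (V₁.2 = V₂.2 ∧ H V₁.1 ≤ H V₂.1)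

open Classical in
/-- `merge V₁ V₂ = V₂` if `V₁ ≤ₑ V₂`, and `V₁` otherwise. -/
noncomputable def merge {σ : Type*} (H : σ → ℕ) (V₁ V₂ : σ × ℕ) : σ × ℕ :=
  if leE H V₁ V₂ then V₂ else V₁

lemma merge_antisymm {σ : Type*} (H : σ → ℕ) (hH : Function.Injective H)
    (u v : σ × ℕ) (h1 : leE H u v) (h2 : leE H v u) : u = v := by
  have ht : u.2 = v.2 := by unfold leE at *; omega
  have hv : H u.1 = H v.1 := by unfold leE at *; omega
  exact Prod.ext (hH hv) ht

lemma merge_pos {σ : Type*} {H : σ → ℕ} {u v : σ × ℕ} (h : leE H u v) :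
    merge H u v = v := by simp [merge, h]

lemma merge_neg {σ : Type*} {H : σ → ℕ} {u v : σ × ℕ} (h : ¬ leE H u v) :
    merge H u v = u := by simp [merge, h]

lemma merge_rcomm {σ : Type*} (H : σ → ℕ) (hH : Function.Injective H)
    (b a a' : σ × ℕ) : merge H (merge H b a) a' = merge H (merge H b a') a := by
  by_cases h1 : leE H b a <;> by_cases h2 : leE H b a' <;>
    rw [show merge H b a = _ from by first | rw [merge_pos h1] | rw [merge_neg h1],
        show merge H b a' = _ from by first | rw [merge_pos h2] | rw [merge_neg h2]] <;>
    unfold merge <;> split_ifs <;>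
    first
      | rfl
      | (exact merge_antisymm H hH _ _ (by unfold leE at *; omega) (by unfold leE at *; omega))
      | (exact (merge_antisymm H hH _ _ (by unfold leE at *; omega) (by unfold leE at *; omega)).symm)
      | (exfalso; unfold leE at *; omega)

lemma merge_comm {σ : Type*} (H : σ → ℕ) (hH : Function.Injective H)
    (a b : σ × ℕ) : merge H a b = merge H b a := by
  unfold merge
  split_ifs <;>
    first
      | rfl
      | (exact merge_antisymm H hH _ _ (by assumption) (by assumption))
      | (exact (merge_antisymm H hH _ _ (by assumption) (by assumption)).symm)
      | (exfalso; unfold leE at *; omega)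

lemma merge_idem {σ : Type*} (H : σ → ℕ) (a : σ × ℕ) : merge H a a = a := by
  unfold merge; split_ifs <;> rfl

/-- Convergence: if `H` is injective, folding merge over two lists that are
permutations of each other yields the same value, so workers that received
the same updates in any order hold identical merged state. -/
theorem merge_fold_perm {σ : Type*} (H : σ → ℕ) (hH : Function.Injective H) :
    ∀ (L L' : List (σ × ℕ)) (hL : L ≠ []) (hL' : L' ≠ []),
      L.Perm L' →
      L.tail.foldl (merge H) (L.head hL) =
        L'.tail.foldl (merge H) (L'.head hL') := by
  intro L L' hL hL' hp
  obtain ⟨h, t, rfl⟩ : ∃ h t, L = h :: t := ⟨L.head hL, L.tail, (List.cons_head_tail (l := L) hL).symm⟩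
  obtain ⟨h', t', rfl⟩ : ∃ h t, L' = h :: t := ⟨L'.head hL', L'.tail, (List.cons_head_tail (l := L') hL').symm⟩
  simp only [List.head_cons, List.tail_cons]
  have rc : ∀ x (hx : x ∈ (h :: t)) y (hy : y ∈ (h :: t)) z,
      merge H (merge H z x) y = merge H (merge H z y) x :=
    fun x _ y _ z => merge_rcomm H hH z x y
  have eq1 : List.foldl (merge H) h (h :: t) = List.foldl (merge H) h (h' :: t') :=
    hp.foldl_eq' rc h
  have eq2 : List.foldl (merge H) h' (h :: t) = List.foldl (merge H) h' (h' :: t') :=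
    hp.foldl_eq' rc h'
  simp only [List.foldl_cons, merge_idem] at eq1 eq2
  by_cases hc : leE H h h'
  · have : merge H h h' = h' := by unfold merge; simp [hc]
    rw [eq1, this]
  · have : merge H h' h = h := by
      rw [merge_comm H hH]; unfold merge; simp [hc]
    rw [← eq2, this]
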